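/- arXiv:2511.06156 — 5 statements merged into one kernel-verified Lean document; each statement's English description precedes it below -/
import Mathlib

section
/- Let n be a positive integer, let r, κ ∈ ℝⁿ have positive entries, let e ∈ ℝⁿ satisfy e_i ≤ 0 for every i, and let E = diag(e) be the diagonal matrix with diagonal e. Let π^min ≤ π^max in ℝⁿ (componentwise). Define the profit P(π) = Σ_{i=1}^n (r_i·exp((Eπ)_i + π_i) − κ_i·exp((Eπ)_i)). Define π* ∈ ℝⁿ componentwise by: π*_i = clip(log((κ_i/r_i)·(e_i/(e_i+1))), π^min_i, π^max_i) if e_i < -1, and π*_i = π^max_i if -1 ≤ e_i ≤ 0, where clip(x, l, u) equals l if x < l, x if l ≤ x ≤ u, and u if x > u. Then π* maximizes P over the box {π ∈ ℝⁿ : π^min ≤ π ≤ π^max}: P(π) ≤ P(π*) for all π in the box. -/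
/-- `clip x l u` equals `l` if `x < l`, `x` if `l ≤ x ≤ u`, and `u` if `x > u`. -/
noncomputable def clip (x l u : ℝ) : ℝ :=
  if x < l then l else if x ≤ u then x else u

private lemma gHasDeriv (r κ e x : ℝ) :
    HasDerivAt (fun y => r * Real.exp ((e+1)*y) - κ * Real.exp (e*y))
      (Real.exp (e*x) * (r*(e+1)*Real.exp x - κ*e)) x := by
  have h1 : HasDerivAt (fun y : ℝ => (e+1)*y) ((e+1)*1) x := (hasDerivAt_id x).const_mul _
  have h2 : HasDerivAt (fun y : ℝ => e*y) (e*1) x := (hasDerivAt_id x).const_mul _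
  have h := (h1.exp.const_mul r).sub (h2.exp.const_mul κ)
  refine h.congr_deriv ?_
  have hadd : Real.exp ((e+1)*x) = Real.exp (e*x) * Real.exp x := by
    rw [← Real.exp_add]; ring_nf
  rw [hadd]; ring

private lemma key_term (r κ e l u x s : ℝ) (hr : 0 < r) (hκ : 0 < κ) (he : e ≤ 0)
    (hlu : l ≤ u) (hx1 : l ≤ x) (hx2 : x ≤ u)
    (hs : s = if e < -1 then clip (Real.log ((κ/r)*(e/(e+1)))) l u else u) :
    r * Real.exp (e*x + x) - κ * Real.exp (e*x) ≤
      r * Real.exp (e*s + s) - κ * Real.exp (e*s) := by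
  have harg : ∀ y : ℝ, e*y + y = (e+1)*y := fun y => by ring
  simp only [harg]
  set g : ℝ → ℝ := fun y => r * Real.exp ((e+1)*y) - κ * Real.exp (e*y) with hg
  have hcont : Continuous g := by fun_prop
  by_cases hlt : e < -1
  · set m := Real.log ((κ/r)*(e/(e+1))) with hm
    have he1 : e + 1 < 0 := by linarith
    have hpos : 0 < (κ/r)*(e/(e+1)) := by
      apply mul_pos (div_pos hκ hr)
      exact div_pos_of_neg_of_neg (by linarith) he1
    have hr0 : r ≠ 0 := ne_of_gt hr
    have he0 : e + 1 ≠ 0 := ne_of_lt he1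
    have hexpm : r*(e+1)*Real.exp m = κ*e := by
      rw [hm, Real.exp_log hpos]
      field_simp
    have hneg : r*(e+1) < 0 := mul_neg_of_pos_of_neg hr he1
    have hmono : StrictMonoOn g (Set.Iic m) := by
      apply strictMonoOn_of_deriv_pos (convex_Iic m) hcont.continuousOn
      intro y hy
      rw [interior_Iic] at hy
      rw [(gHasDeriv r κ e y).deriv]
      have h1 : Real.exp y < Real.exp m := Real.exp_lt_exp.mpr hy
      have h2 : (0:ℝ) < Real.exp (e*y) := Real.exp_pos _
      have h3 := mul_lt_mul_of_neg_left h1 hneg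
      exact mul_pos h2 (by nlinarith)
    have hanti : StrictAntiOn g (Set.Ici m) := by
      apply strictAntiOn_of_deriv_neg (convex_Ici m) hcont.continuousOn
      intro y hy
      rw [interior_Ici] at hy
      rw [(gHasDeriv r κ e y).deriv]
      have h1 : Real.exp m < Real.exp y := Real.exp_lt_exp.mpr hy
      have h2 : (0:ℝ) < Real.exp (e*y) := Real.exp_pos _
      have h3 := mul_lt_mul_of_neg_left h1 hneg
      exact mul_neg_of_pos_of_neg h2 (by nlinarith)
    rw [hs, if_pos hlt]
    unfold clip
    split_ifs with h1 h2
    · -- m < l, s = l, g antitone on [m, ∞)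
      exact hanti.antitoneOn h1.le (le_of_lt (lt_of_lt_of_le h1 hx1)) hx1
    · -- l ≤ m ≤ u, s = m
      rcases le_total x m with hxm | hxm
      · exact hmono.monotoneOn hxm Set.self_mem_Iic hxm
      · exact hanti.antitoneOn Set.self_mem_Ici hxm hxm
    · -- u < m, s = u, g monotone on (-∞, m]
      push_neg at h2
      exact hmono.monotoneOn (le_of_lt (lt_of_le_of_lt hx2 h2)) h2.le hx2
  · -- -1 ≤ e ≤ 0 : g strictly increasing
    push_neg at hlt
    have hmono : StrictMono g := by
      apply strictMono_of_deriv_pos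
      intro y
      rw [(gHasDeriv r κ e y).deriv]
      rcases eq_or_lt_of_le hlt with heq | hgt
      · have hq : (0:ℝ) < Real.exp (e*y) := Real.exp_pos _
        have h3 : r*(e+1)*Real.exp y - κ*e = κ := by rw [← heq]; ring
        rw [h3]; exact mul_pos hq hκ
      · have hq : (0:ℝ) < Real.exp (e*y) := Real.exp_pos _
        have h3 : 0 < r*(e+1)*Real.exp y :=
          mul_pos (mul_pos hr (by linarith)) (Real.exp_pos y)
        have h4 : 0 ≤ κ*(-e) := mul_nonneg hκ.le (by linarith)
        nlinarith
    rw [hs, if_neg (not_lt.mpr hlt)]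
    exact hmono.monotone hx2

/-- Diagonal-elasticity product pricing problem with box constraints: with
`E = diag e`, `e i ≤ 0`, the profit
`P π = ∑ i, (r i * exp ((E π) i + π i) - κ i * exp ((E π) i))`
is maximized over the box `{π : πmin ≤ π ≤ πmax}` by the componentwise clipped
analytic solution `πstar`. -/
theorem diagonal_elasticity_box_optimum
    (n : ℕ) (hn : 0 < n) (r κ e πmin πmax : Fin n → ℝ)
    (hr : ∀ i, 0 < r i) (hκ : ∀ i, 0 < κ i) (he : ∀ i, e i ≤ 0)
    (hbox : ∀ i, πmin i ≤ πmax i)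
    (E : Matrix (Fin n) (Fin n) ℝ) (hE : E = Matrix.diagonal e)
    (P : (Fin n → ℝ) → ℝ)
    (hP : ∀ π : Fin n → ℝ,
      P π = ∑ i, (r i * Real.exp (E.mulVec π i + π i)
                    - κ i * Real.exp (E.mulVec π i)))
    (πstar : Fin n → ℝ)
    (hπstar : ∀ i, πstar i =
      if e i < -1 then
        clip (Real.log ((κ i / r i) * (e i / (e i + 1)))) (πmin i) (πmax i)
      else πmax i) :
    ∀ π : Fin n → ℝ, (∀ i, πmin i ≤ π i ∧ π i ≤ πmax i) → P π ≤ P πstar := by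
  intro π hπ
  rw [hP, hP]
  apply Finset.sum_le_sum
  intro i _
  have hmv : ∀ v : Fin n → ℝ, E.mulVec v i = e i * v i := by
    intro v; rw [hE]; simp [Matrix.mulVec_diagonal]
  rw [hmv, hmv]
  exact key_term (r i) (κ i) (e i) (πmin i) (πmax i) (π i) (πstar i) (hr i) (hκ i)
    (he i) (hbox i) (hπ i).1 (hπ i).2 (hπstar i)
end

section
/- The function h : ℝ → ℝ defined by h(t) = (exp(t) − 1 − t)/t² for t ≠ 0 and h(0) = 1/2 is strictly monotone increasing on ℝ. -/
open Real Filter Set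

private lemma g_deriv (x : ℝ) :
    HasDerivAt (fun t : ℝ => (t - 2) * Real.exp t + t + 2)
      ((x - 1) * Real.exp x + 1) x := by
  have h1 : HasDerivAt (fun t : ℝ => (t - 2) * Real.exp t)
      (1 * Real.exp x + (x - 2) * Real.exp x) x :=
    ((hasDerivAt_id x).sub_const 2).mul (Real.hasDerivAt_exp x)
  have := (h1.add_const 0)
  have h2 := (h1.add (hasDerivAt_id x)).add_const 2
  exact h2.congr_deriv (by ring)

private lemma g_deriv_pos {x : ℝ} (hx : x ≠ 0) :
    0 < (x - 1) * Real.exp x + 1 := by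
  have h1 : (-x) + 1 < Real.exp (-x) := Real.add_one_lt_exp (neg_ne_zero.mpr hx)
  have h2 : Real.exp (-x) * Real.exp x = 1 := by
    rw [← Real.exp_add]; simp
  nlinarith [Real.exp_pos x, Real.exp_pos (-x)]

private lemma g_pos {x : ℝ} (hx : 0 < x) :
    0 < (x - 2) * Real.exp x + x + 2 := by
  have hm : StrictMonoOn (fun t : ℝ => (t - 2) * Real.exp t + t + 2) (Set.Ici 0) := by
    apply strictMonoOn_of_deriv_pos (convex_Ici 0)
    · exact (((continuous_id.sub continuous_const).mul Real.continuous_exp).add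
        continuous_id |>.add continuous_const).continuousOn
    · intro t ht
      rw [interior_Ici] at ht
      rw [(g_deriv t).deriv]
      exact g_deriv_pos (ne_of_gt ht)
  have := hm (Set.self_mem_Ici) (Set.mem_Ici.mpr hx.le) hx
  simpa using this

private lemma g_neg {x : ℝ} (hx : x < 0) :
    (x - 2) * Real.exp x + x + 2 < 0 := by
  have hm : StrictMonoOn (fun t : ℝ => (t - 2) * Real.exp t + t + 2) (Set.Iic 0) := by
    apply strictMonoOn_of_deriv_pos (convex_Iic 0)
    · exact (((continuous_id.sub continuous_const).mul Real.continuous_exp).add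
        continuous_id |>.add continuous_const).continuousOn
    · intro t ht
      rw [interior_Iic] at ht
      rw [(g_deriv t).deriv]
      exact g_deriv_pos (ne_of_lt ht)
  have := hm (Set.mem_Iic.mpr hx.le) Set.self_mem_Iic hx
  simpa using this

/-- The function `h t = (exp t - 1 - t) / t²` for `t ≠ 0`, with `h 0 = 1/2`,
is strictly monotone increasing on `ℝ`. -/
theorem exp_quadratic_coefficient_strictMono
    (h : ℝ → ℝ)
    (hh : ∀ t : ℝ, t ≠ 0 → h t = (Real.exp t - 1 - t) / t ^ 2)
    (h0 : h 0 = 1 / 2) :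
    StrictMono h := by
  apply strictMono_of_deriv_pos
  intro x
  rcases eq_or_ne x 0 with rfl | hx
  · -- deriv h 0 = 1/6
    have hd : HasDerivAt h (1/6) 0 := by
      rw [hasDerivAt_iff_tendsto_slope]
      rw [Metric.tendsto_nhdsWithin_nhds]
      intro ε hε
      refine ⟨min 1 (ε * 96 / 5), by positivity, ?_⟩
      intro t ht hdist
      simp only [Set.mem_compl_iff, Set.mem_singleton_iff] at ht
      have ht1 : |t| ≤ 1 := by
        rw [Real.dist_eq, sub_zero] at hdist
        exact le_of_lt (lt_of_lt_of_le hdist (min_le_left _ _))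
      have ht2 : |t| < ε * 96 / 5 := by
        rw [Real.dist_eq, sub_zero] at hdist
        exact lt_of_lt_of_le hdist (min_le_right _ _)
      have hb := Real.exp_bound ht1 (by norm_num : 0 < 4)
      have hsum : ∑ m ∈ Finset.range 4, t ^ m / (m.factorial : ℝ)
          = 1 + t + t^2/2 + t^3/6 := by
        simp [Finset.sum_range_succ, Nat.factorial]
      rw [hsum] at hb
      have hbn : |Real.exp t - (1 + t + t^2/2 + t^3/6)| ≤ |t|^4 * (5/96) := by
        convert hb using 2
        norm_num [Nat.factorial]
      have htne : (t:ℝ) ≠ 0 := ht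
      have ht3 : |t|^3 > 0 := by positivity
      rw [Real.dist_eq]
      have hslope : slope h 0 t - 1/6
          = (Real.exp t - (1 + t + t^2/2 + t^3/6)) / t^3 := by
        rw [slope_def_field, h0, hh t htne]
        field_simp
        ring
      rw [hslope, abs_div, abs_pow]
      calc |Real.exp t - (1 + t + t^2/2 + t^3/6)| / |t|^3
          ≤ (|t|^4 * (5/96)) / |t|^3 := by
            exact div_le_div_of_nonneg_right hbn ht3.le
        _ = |t| * (5/96) := by
            field_simp
        _ < ε := by linarith
    rw [hd.deriv]; norm_num
  · -- x ≠ 0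
    have hev : h =ᶠ[nhds x] fun t => (Real.exp t - 1 - t) / t ^ 2 := by
      filter_upwards [isOpen_compl_singleton.mem_nhds hx] with t ht
      exact hh t ht
    have hf : HasDerivAt (fun t : ℝ => (Real.exp t - 1 - t) / t ^ 2)
        (((Real.exp x - 1) * x^2 - (Real.exp x - 1 - x) * (2*x)) / (x^2)^2) x := by
      have hu : HasDerivAt (fun t : ℝ => Real.exp t - 1 - t) (Real.exp x - 1) x := by
        exact ((Real.hasDerivAt_exp x).sub_const 1).sub (hasDerivAt_id x)
      have hv : HasDerivAt (fun t : ℝ => t ^ 2) (2 * x) x := by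
        simpa using hasDerivAt_pow 2 x
      exact hu.div hv (pow_ne_zero 2 hx)
    rw [hev.deriv_eq, hf.deriv]
    have key : ((Real.exp x - 1) * x^2 - (Real.exp x - 1 - x) * (2*x)) / (x^2)^2
        = ((x - 2) * Real.exp x + x + 2) / x^3 := by
      field_simp
      ring
    rw [key]
    rcases lt_or_gt_of_ne hx with hneg | hpos
    · have := g_neg hneg
      have hx2 : 0 < x^2 := by positivity
      have hx3 : x^3 < 0 := by nlinarith
      exact div_pos_of_neg_of_neg this hx3
    · exact div_pos (g_pos hpos) (by positivity)
end

section
/- Let δ̂ ∈ ℝ, let b > 0, and set β = (exp(b) − b − 1)/b². Then for every δ ∈ ℝ with δ ≤ δ̂ + b, exp(δ) ≤ exp(δ̂)·(1 + (δ − δ̂) + β·(δ − δ̂)²), with equality when δ = δ̂ and when δ = δ̂ + b. -/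
open Real Nat

lemma qmm_exp_tail (x : ℝ) : Real.exp x - 1 - x = ∑' n : ℕ, x ^ (n + 2) / (n + 2)! := by
  have hs := Real.summable_pow_div_factorial x
  have h := Summable.sum_add_tsum_nat_add 2 hs
  rw [Real.exp_eq_exp_ℝ, NormedSpace.exp_eq_tsum_div]
  simp only []
  rw [← h]
  simp [Finset.sum_range_succ]
  ring

lemma qmm_key {t b : ℝ} (ht : 0 ≤ t) (htb : t ≤ b) :
    b ^ 2 * (Real.exp t - 1 - t) ≤ t ^ 2 * (Real.exp b - 1 - b) := by
  rw [qmm_exp_tail t, qmm_exp_tail b, ← tsum_mul_left, ← tsum_mul_left]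
  have hst : Summable fun n : ℕ => b ^ 2 * (t ^ (n + 2) / (n + 2)!) := by
    have := ((summable_nat_add_iff 2).2 (Real.summable_pow_div_factorial t)).mul_left (b ^ 2)
    simpa using this
  have hsb : Summable fun n : ℕ => t ^ 2 * (b ^ (n + 2) / (n + 2)!) := by
    have := ((summable_nat_add_iff 2).2 (Real.summable_pow_div_factorial b)).mul_left (t ^ 2)
    simpa using this
  refine Summable.tsum_le_tsum (fun n => ?_) hst hsb
  have hfac : (0:ℝ) < (n + 2)! := by positivity
  have hnum : b ^ 2 * t ^ (n + 2) ≤ t ^ 2 * b ^ (n + 2) := by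
    have h1 := pow_le_pow_left₀ ht htb n
    have h2 : t ^ (n + 2) = t ^ 2 * t ^ n := by ring
    have h3 : b ^ (n + 2) = b ^ n * b ^ 2 := by ring
    rw [h2, h3]
    have := mul_le_mul_of_nonneg_left h1 (by positivity : (0:ℝ) ≤ t ^ 2 * b ^ 2)
    nlinarith [this]
  calc b ^ 2 * (t ^ (n + 2) / (n + 2)!) = b ^ 2 * t ^ (n + 2) / (n + 2)! := by ring
    _ ≤ t ^ 2 * b ^ (n + 2) / (n + 2)! := by
        gcongr
    _ = t ^ 2 * (b ^ (n + 2) / (n + 2)!) := by ring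

lemma qmm_neg {t : ℝ} (ht : t ≤ 0) : Real.exp t ≤ 1 + t + t ^ 2 / 2 := by
  set u := -t with hu
  have hu0 : 0 ≤ u := by linarith
  have h1 := Real.quadratic_le_exp_of_nonneg hu0
  have ht2 : t = -u := by rw [hu]; ring
  have hpos : (0:ℝ) < 1 - u + u ^ 2 / 2 := by nlinarith [sq_nonneg (u - 1)]
  have hX : 1 ≤ (1 + -u + (-u) ^ 2 / 2) * Real.exp u := by
    nlinarith [mul_le_mul_of_nonneg_left h1 hpos.le, sq_nonneg (u ^ 2)]
  rw [ht2, Real.exp_neg, ← one_div, div_le_iff₀ (Real.exp_pos u)]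
  linarith

/-- The QMM quadratic majorizer: for `b > 0` and `β = (exp b - b - 1)/b²`,
`exp δ ≤ exp δ̂ * (1 + (δ - δ̂) + β * (δ - δ̂)²)` for all `δ ≤ δ̂ + b`,
with equality at `δ = δ̂` and at `δ = δ̂ + b`. -/
theorem qmm_quadratic_majorizer
    (δhat b β : ℝ) (hb : 0 < b)
    (hβ : β = (Real.exp b - b - 1) / b ^ 2) :
    (∀ δ : ℝ, δ ≤ δhat + b →
      Real.exp δ ≤ Real.exp δhat * (1 + (δ - δhat) + β * (δ - δhat) ^ 2)) ∧
    (∀ δ : ℝ, δ = δhat ∨ δ = δhat + b →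
      Real.exp δ = Real.exp δhat * (1 + (δ - δhat) + β * (δ - δhat) ^ 2)) := by
  have hb2 : (0:ℝ) < b ^ 2 := by positivity
  have hβhalf : 1 / 2 ≤ β := by
    have := Real.quadratic_le_exp_of_nonneg hb.le
    rw [hβ, le_div_iff₀ hb2]; nlinarith
  have key : ∀ t : ℝ, t ≤ b → Real.exp t ≤ 1 + t + β * t ^ 2 := by
    intro t htb
    rcases le_or_gt t 0 with ht | ht
    · have := qmm_neg ht
      nlinarith [sq_nonneg t]
    · have hthis := qmm_key ht.le htb
      have hβb : β * b ^ 2 = Real.exp b - b - 1 := by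
        rw [hβ]; field_simp
      have h3 : β * b ^ 2 * t ^ 2 = (Real.exp b - b - 1) * t ^ 2 := by rw [hβb]
      nlinarith [hthis, h3, hb2]
  constructor
  · intro δ hδ
    have h := key (δ - δhat) (by linarith)
    calc Real.exp δ = Real.exp δhat * Real.exp (δ - δhat) := by
          rw [← Real.exp_add]; ring_nf
      _ ≤ Real.exp δhat * (1 + (δ - δhat) + β * (δ - δhat) ^ 2) :=
          mul_le_mul_of_nonneg_left h (Real.exp_pos δhat).le
  · intro δ hδ
    rcases hδ with rfl | rfl
    · simp
    · have hbne : b ≠ 0 := hb.ne'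
      have : 1 + (δhat + b - δhat) + β * (δhat + b - δhat) ^ 2 = Real.exp b := by
        rw [hβ]; field_simp; ring
      rw [this, ← Real.exp_add]
end

section
/- Let δ̂ ∈ ℝ, let b > 0, and set β = (exp(b) − b − 1)/b². If β' ∈ ℝ satisfies exp(δ) ≤ exp(δ̂)·(1 + (δ − δ̂) + β'·(δ − δ̂)²) for every δ ≤ δ̂ + b, then β' ≥ β. That is, β is the smallest coefficient for which the quadratic majorization of exp on (−∞, δ̂ + b] holds. -/
/-- Minimality of the QMM majorizer coefficient: if
`exp δ ≤ exp δ̂ * (1 + (δ - δ̂) + β' * (δ - δ̂)²)` holds for every `δ ≤ δ̂ + b`,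
then `β' ≥ β = (exp b - b - 1)/b²`. -/
theorem qmm_quadratic_majorizer_minimal
    (δhat b β : ℝ) (hb : 0 < b)
    (hβ : β = (Real.exp b - b - 1) / b ^ 2)
    (β' : ℝ)
    (hmaj : ∀ δ : ℝ, δ ≤ δhat + b →
      Real.exp δ ≤ Real.exp δhat * (1 + (δ - δhat) + β' * (δ - δhat) ^ 2)) :
    β ≤ β' := by
  have h := hmaj (δhat + b) le_rfl
  rw [Real.exp_add] at h
  have hE := (Real.exp_pos δhat)
  rw [hβ, div_le_iff₀ (by positivity)]
  nlinarith
end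

section
/- Let n be a positive integer, let r, κ ∈ ℝⁿ have nonnegative entries, let E ∈ ℝ^{n×n}, and define the profit P(π) = Σ_{i=1}^n (r_i·exp((Eπ)_i + π_i) − κ_i·exp((Eπ)_i)). Let S ⊆ ℝⁿ and δ^max ∈ ℝⁿ with Eπ ≤ δ^max componentwise for all π ∈ S. Let π̂ ∈ S with b_i = δ^max_i − (Eπ̂)_i > 0 for all i, set β_i = (exp(b_i) − b_i − 1)/b_i², define the QMM surrogate Q(π) = Σ_{i=1}^n (r_i·exp((Eπ̂)_i + π̂_i)·(1 + (Eπ)_i + π_i − (Eπ̂)_i − π̂_i) − κ_i·exp((Eπ̂)_i)·(1 + ((Eπ)_i − (Eπ̂)_i) + β_i·((Eπ)_i − (Eπ̂)_i)²)), and suppose π⁺ ∈ S maximizes Q over S. Then P(π⁺) ≥ P(π̂); that is, the profit does not decrease at a QMM iteration. -/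
/-- The exponential remainder as a shifted power series. -/
lemma qmm_exp_remainder (x : ℝ) :
    Real.exp x - x - 1 = ∑' n : ℕ, x ^ (n + 2) / (Nat.factorial (n + 2) : ℝ) := by
  have hs := Real.summable_pow_div_factorial x
  have h := Summable.sum_add_tsum_nat_add 2 hs
  have hexp : Real.exp x = ∑' n : ℕ, x ^ n / (Nat.factorial n : ℝ) := by
    rw [Real.exp_eq_exp_ℝ, NormedSpace.exp_eq_tsum_div]
  rw [hexp, ← h]
  simp [Finset.sum_range_succ]
  ring

/-- Quadratic upper bound for `exp` on nonpositive reals. -/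
lemma qmm_exp_le_quad_of_nonpos {u : ℝ} (hu : u ≤ 0) :
    Real.exp u ≤ 1 + u + u ^ 2 / 2 := by
  have h1 := Real.quadratic_le_exp_of_nonneg (neg_nonneg.2 hu)
  have h2 := Real.exp_pos u
  have h3 : Real.exp u * Real.exp (-u) = 1 := by
    rw [← Real.exp_add]; simp
  nlinarith [sq_nonneg u, sq_nonneg (u * u), Real.exp_pos (-u)]

set_option maxHeartbeats 1000000 in
/-- Monotonicity of `(exp u - u - 1)/u²` type quantity: for `0 ≤ u ≤ b`,
`b² (exp u - u - 1) ≤ u² (exp b - b - 1)`. -/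
lemma qmm_mono {b u : ℝ} (hu0 : 0 ≤ u) (hub : u ≤ b) :
    b ^ 2 * (Real.exp u - u - 1) ≤ u ^ 2 * (Real.exp b - b - 1) := by
  have hb0 : (0 : ℝ) ≤ b := le_trans hu0 hub
  have hsu : Summable (fun n : ℕ => u ^ (n + 2) / (Nat.factorial (n + 2) : ℝ)) :=
    (summable_nat_add_iff 2).2 (Real.summable_pow_div_factorial u)
  have hsb : Summable (fun n : ℕ => b ^ (n + 2) / (Nat.factorial (n + 2) : ℝ)) :=
    (summable_nat_add_iff 2).2 (Real.summable_pow_div_factorial b)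
  have hru := qmm_exp_remainder u
  have hrb := qmm_exp_remainder b
  rw [hru, hrb, ← tsum_mul_left, ← tsum_mul_left]
  refine Summable.tsum_le_tsum (fun n => ?_) (hsu.mul_left _) (hsb.mul_left _)
  rw [mul_div_assoc', mul_div_assoc']
  apply div_le_div_of_nonneg_right _ (by positivity)
  have h1 : u ^ n ≤ b ^ n := pow_le_pow_left₀ hu0 hub n
  rw [show b ^ 2 * u ^ (n + 2) = (b ^ 2 * u ^ 2) * u ^ n by ring,
     show u ^ 2 * b ^ (n + 2) = (b ^ 2 * u ^ 2) * b ^ n by ring]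
  exact mul_le_mul_of_nonneg_left h1 (by positivity)

/-- Key surrogate inequality: for `u ≤ b`, `b > 0`,
`exp u ≤ 1 + u + ((exp b - b - 1)/b²) u²`. -/
lemma qmm_key_s11 {b u : ℝ} (hb : 0 < b) (hu : u ≤ b) :
    Real.exp u ≤ 1 + u + (Real.exp b - b - 1) / b ^ 2 * u ^ 2 := by
  have hb2 : (0 : ℝ) < b ^ 2 := by positivity
  have H : b ^ 2 * (Real.exp u - u - 1) ≤ (Real.exp b - b - 1) * u ^ 2 := by
    rcases le_or_gt u 0 with h | h
    · have h1 := qmm_exp_le_quad_of_nonpos h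
      have h2 := Real.quadratic_le_exp_of_nonneg hb.le
      nlinarith [sq_nonneg u, sq_nonneg b]
    · have := qmm_mono h.le hu
      nlinarith
  have h2 : Real.exp u - u - 1 ≤ (Real.exp b - b - 1) * u ^ 2 / b ^ 2 := by
    rw [le_div_iff₀ hb2]; nlinarith
  have h3 : (Real.exp b - b - 1) / b ^ 2 * u ^ 2
      = (Real.exp b - b - 1) * u ^ 2 / b ^ 2 := by ring
  linarith [h3 ▸ h2]


/-- A QMM iteration does not decrease the profit: if `π⁺` maximizes the QMM
surrogate `Q` over the feasible set `S` (on which `Eπ ≤ δmax` componentwise),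
then `P π⁺ ≥ P π̂`. -/
theorem qmm_iteration_monotone
    (n : ℕ) (hn : 0 < n) (r κ : Fin n → ℝ)
    (hr : ∀ i, 0 ≤ r i) (hκ : ∀ i, 0 ≤ κ i)
    (E : Matrix (Fin n) (Fin n) ℝ)
    (P : (Fin n → ℝ) → ℝ)
    (hP : ∀ π : Fin n → ℝ,
      P π = ∑ i, (r i * Real.exp (E.mulVec π i + π i)
                    - κ i * Real.exp (E.mulVec π i)))
    (S : Set (Fin n → ℝ)) (δmax : Fin n → ℝ)
    (hS : ∀ π ∈ S, ∀ i, E.mulVec π i ≤ δmax i)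
    (πhat : Fin n → ℝ) (hπhat : πhat ∈ S)
    (b : Fin n → ℝ) (hb : ∀ i, b i = δmax i - E.mulVec πhat i)
    (hbpos : ∀ i, 0 < b i)
    (β : Fin n → ℝ) (hβ : ∀ i, β i = (Real.exp (b i) - b i - 1) / (b i) ^ 2)
    (Q : (Fin n → ℝ) → ℝ)
    (hQ : ∀ π : Fin n → ℝ,
      Q π = ∑ i, (r i * Real.exp (E.mulVec πhat i + πhat i) *
                    (1 + E.mulVec π i + π i - E.mulVec πhat i - πhat i)
                  - κ i * Real.exp (E.mulVec πhat i) *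
                    (1 + (E.mulVec π i - E.mulVec πhat i)
                       + β i * (E.mulVec π i - E.mulVec πhat i) ^ 2)))
    (πplus : Fin n → ℝ) (hπplus : πplus ∈ S)
    (hmax : ∀ π ∈ S, Q π ≤ Q πplus) :
    P πhat ≤ P πplus := by
  have htight : Q πhat = P πhat := by
    rw [hQ, hP]
    apply Finset.sum_congr rfl
    intro i _
    ring
  have hminor : Q πplus ≤ P πplus := by
    rw [hQ, hP]
    apply Finset.sum_le_sum
    intro i _
    set a := E.mulVec πhat i with ha
    set d := E.mulVec πplus i with hd
    have hA : r i * Real.exp (a + πhat i) * (1 + d + πplus i - a - πhat i)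
        ≤ r i * Real.exp (d + πplus i) := by
      have h1 : 1 + d + πplus i - a - πhat i
          = ((d + πplus i) - (a + πhat i)) + 1 := by ring
      have h2 := Real.add_one_le_exp ((d + πplus i) - (a + πhat i))
      have h3 : Real.exp (a + πhat i) * Real.exp ((d + πplus i) - (a + πhat i))
          = Real.exp (d + πplus i) := by
        rw [← Real.exp_add]; ring_nf
      calc r i * Real.exp (a + πhat i) * (1 + d + πplus i - a - πhat i)
          ≤ r i * Real.exp (a + πhat i)
              * Real.exp ((d + πplus i) - (a + πhat i)) := by
            rw [h1]
            exact mul_le_mul_of_nonneg_left h2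
              (mul_nonneg (hr i) (Real.exp_pos _).le)
        _ = r i * Real.exp (d + πplus i) := by rw [mul_assoc, h3]
    have hB : κ i * Real.exp d
        ≤ κ i * Real.exp a * (1 + (d - a) + β i * (d - a) ^ 2) := by
      have hub : d - a ≤ b i := by
        have := hS πplus hπplus i
        rw [hb i]; linarith
      have hkey := qmm_key_s11 (hbpos i) hub
      rw [← hβ i] at hkey
      have h3 : Real.exp d = Real.exp a * Real.exp (d - a) := by
        rw [← Real.exp_add]; ring_nf
      calc κ i * Real.exp d = κ i * (Real.exp a * Real.exp (d - a)) := by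
            rw [h3]
        _ ≤ κ i * (Real.exp a * (1 + (d - a) + β i * (d - a) ^ 2)) := by
            refine mul_le_mul_of_nonneg_left ?_ (hκ i)
            exact mul_le_mul_of_nonneg_left hkey (Real.exp_pos _).le
        _ = κ i * Real.exp a * (1 + (d - a) + β i * (d - a) ^ 2) := by ring
    linarith
  calc P πhat = Q πhat := htight.symm
    _ ≤ Q πplus := hmax πhat hπhat
    _ ≤ P πplus := hminor
end
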